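/- Let G be a looped simple graph with at least one edge incident to each of two distinct vertices v, w. If ρ and σ are two elements of the isotropic matroid M[IAS(G)] that are in series (no basis excludes both, and neither is a coloop), then they are the two non-loop elements of the vertex triple of an isolated vertex of G. Moreover, no element of M[IAS(G)] is a coloop. -/

import Mathlib

/-- Columns of `IAS(G) = (I | A | A+I)` over GF(2). -/
def iasCol {V : Type} [DecidableEq V] (A : Matrix V V (ZMod 2)) :
    V ⊕ V ⊕ V → V → ZMod 2
  | Sum.inl v => fun w => if w = v then 1 else 0
  | Sum.inr (Sum.inl v) => fun w => A w v
  | Sum.inr (Sum.inr v) => fun w => A w v + (if w = v then 1 else 0)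

/-- Independence in `M[IAS(G)]`. -/
def iasIndep {V : Type} [DecidableEq V] (A : Matrix V V (ZMod 2))
    (S : Set (V ⊕ V ⊕ V)) : Prop :=
  LinearIndependent (ZMod 2) (S.restrict (iasCol A))

/-- A basis of `M[IAS(G)]` is a maximal independent set. -/
def iasBasis {V : Type} [DecidableEq V] (A : Matrix V V (ZMod 2))
    (Bs : Set (V ⊕ V ⊕ V)) : Prop :=
  iasIndep A Bs ∧ ∀ B', Bs ⊆ B' → iasIndep A B' → B' = Bs

/-- A coloop is an element contained in every basis. -/
def iasColoop {V : Type} [DecidableEq V] (A : Matrix V V (ZMod 2))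
    (x : V ⊕ V ⊕ V) : Prop :=
  ∀ Bs, iasBasis A Bs → x ∈ Bs

set_option linter.unusedSectionVars false

section Aux

variable {V : Type} [Fintype V] [DecidableEq V] (A : Matrix V V (ZMod 2))

/-- The non-loop, non-`φ` element of the vertex triple with nonzero `u`-entry. -/
def cEl (u : V) : V ⊕ V ⊕ V :=
  if A u u = 0 then Sum.inr (Sum.inr u) else Sum.inr (Sum.inl u)

/-- The other non-`φ` element of the vertex triple (with zero `u`-entry). -/
def dEl (u : V) : V ⊕ V ⊕ V :=
  if A u u = 0 then Sum.inr (Sum.inl u) else Sum.inr (Sum.inr u)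

lemma zmod2_ne_zero {x : ZMod 2} (h : x ≠ 0) : x = 1 := by
  fin_cases x
  · exact absurd rfl h
  · rfl

lemma cCol (u : V) : iasCol A (cEl A u) = fun w => if w = u then 1 else A w u := by
  unfold cEl
  by_cases h : A u u = 0
  · rw [if_pos h]
    funext w
    show A w u + (if w = u then 1 else 0) = _
    by_cases hw : w = u
    · subst hw; rw [if_pos rfl, if_pos rfl, h, zero_add]
    · rw [if_neg hw, if_neg hw, add_zero]
  · rw [if_neg h]
    funext w
    show A w u = _
    by_cases hw : w = u
    · subst hw; rw [if_pos rfl, zmod2_ne_zero h]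
    · rw [if_neg hw]

lemma dCol (u : V) : iasCol A (dEl A u) = fun w => if w = u then 0 else A w u := by
  unfold dEl
  by_cases h : A u u = 0
  · rw [if_pos h]
    funext w
    show A w u = _
    by_cases hw : w = u
    · subst hw; rw [if_pos rfl, h]
    · rw [if_neg hw]
  · rw [if_neg h]
    funext w
    show A w u + (if w = u then 1 else 0) = _
    by_cases hw : w = u
    · subst hw; rw [if_pos rfl, if_pos rfl, zmod2_ne_zero h]; decide
    · rw [if_neg hw, if_neg hw, add_zero]

lemma cEl_ne_inl (u s : V) : cEl A u ≠ Sum.inl s := by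
  unfold cEl; split <;> simp

lemma dEl_ne_inl (u s : V) : dEl A u ≠ Sum.inl s := by
  unfold dEl; split <;> simp

lemma cEl_ne_dEl (u : V) : cEl A u ≠ dEl A u := by
  unfold cEl dEl; split <;> simp

lemma mem_span_all {p : Submodule (ZMod 2) (V → ZMod 2)}
    (h : ∀ v, iasCol A (Sum.inl v) ∈ p) (f : V → ZMod 2) : f ∈ p := by
  have hf : f = ∑ v : V, f v • iasCol A (Sum.inl v) := by
    funext w
    have : ∀ v : V, (f v • iasCol A (Sum.inl v)) w = if v = w then f v else 0 := by
      intro v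
      rw [Pi.smul_apply]
      show f v • (if w = v then (1:ZMod 2) else 0) = _
      by_cases h : w = v
      · subst h; simp
      · simp [h, Ne.symm h]
    rw [Finset.sum_apply]
    simp only [this, Finset.sum_ite_eq', Finset.mem_univ, if_true]
  rw [hf]
  exact Submodule.sum_mem _ fun v _ => p.smul_mem _ (h v)

lemma std_mem {p : Submodule (ZMod 2) (V → ZMod 2)} (T : Finset V) {u : V} (hu : u ∈ T)
    {g : V → ZMod 2} (hg : g ∈ p) (hgu : g u = 1) (hT : ∀ s ∈ T, s ≠ u → g s = 0)
    (he : ∀ s, s ∉ T → iasCol A (Sum.inl s) ∈ p) :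
    iasCol A (Sum.inl u) ∈ p := by
  have key : iasCol A (Sum.inl u) = g + ∑ s ∈ Tᶜ, g s • iasCol A (Sum.inl s) := by
    funext w
    have : ∀ s : V, (g s • iasCol A (Sum.inl s)) w = if s = w then g s else 0 := by
      intro s
      rw [Pi.smul_apply]
      show g s • (if w = s then (1:ZMod 2) else 0) = _
      by_cases h : w = s
      · subst h; simp
      · simp [h, Ne.symm h]
    rw [Pi.add_apply, Finset.sum_apply]
    simp only [this, Finset.sum_ite_eq', Finset.mem_compl]
    show (if w = u then (1:ZMod 2) else 0) = _
    by_cases hwu : w = u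
    · subst hwu; simp [hu, hgu]
    · by_cases hwT : w ∈ T
      · simp [hwu, hwT, hT w hwT hwu]
      · simp [hwu, hwT, CharTwo.add_self_eq_zero]
  rw [key]
  exact Submodule.add_mem _ hg
    (Submodule.sum_mem _ fun s hs => p.smul_mem _ (he s (Finset.mem_compl.mp hs)))

lemma iasBasis_of_fun (b : V → V ⊕ V ⊕ V) (hb : Function.Injective b)
    (hspan : ∀ v, iasCol A (Sum.inl v) ∈ Submodule.span (ZMod 2) (Set.range (iasCol A ∘ b))) :
    iasBasis A (Set.range b) := by
  have hspan' : ∀ f : V → ZMod 2, f ∈ Submodule.span (ZMod 2) (Set.range (iasCol A ∘ b)) :=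
    mem_span_all A hspan
  have hindep : LinearIndependent (ZMod 2) (iasCol A ∘ b) := by
    have h1 : ⊤ ≤ Submodule.span (ZMod 2) (Set.range (iasCol A ∘ b)) := fun f _ => hspan' f
    have h2 : Fintype.card V = Module.finrank (ZMod 2) (V → ZMod 2) :=
      (Module.finrank_pi _).symm
    exact linearIndependent_of_top_le_span_of_card_eq_finrank h1 h2
  constructor
  · show LinearIndependent (ZMod 2) ((Set.range b).restrict (iasCol A))
    rw [← linearIndependent_equiv (Equiv.ofInjective b hb)]
    have heq : (Set.range b).restrict (iasCol A) ∘ (Equiv.ofInjective b hb) = iasCol A ∘ b := by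
      funext s; rfl
    rw [heq]
    exact hindep
  · intro B' hBB' hB'
    ext y
    refine ⟨fun hy => ?_, fun hy => hBB' hy⟩
    by_contra hyr
    have hnm := hB'.notMem_span_image (s := {j : B' | (j : V ⊕ V ⊕ V) ∈ Set.range b})
      (x := ⟨y, hy⟩) (by simpa using hyr)
    apply hnm
    have himg : B'.restrict (iasCol A) '' {j : B' | (j : V ⊕ V ⊕ V) ∈ Set.range b}
        = Set.range (iasCol A ∘ b) := by
      ext f
      constructor
      · rintro ⟨⟨x, hx⟩, hxr, rfl⟩
        obtain ⟨s, rfl⟩ := hxr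
        exact ⟨s, rfl⟩
      · rintro ⟨s, rfl⟩
        exact ⟨⟨b s, hBB' ⟨s, rfl⟩⟩, ⟨s, rfl⟩, rfl⟩
    rw [himg]
    exact hspan' _

/-- The standard basis `{φ(v) : v ∈ V}`. -/
lemma basis_inl : iasBasis A (Set.range (Sum.inl : V → V ⊕ V ⊕ V)) := by
  apply iasBasis_of_fun
  · exact fun a b h => Sum.inl.inj h
  · exact fun v => Submodule.subset_span ⟨v, rfl⟩

/-- One-vertex-substituted basis. -/
lemma basis_one (u : V) (x1 : V ⊕ V ⊕ V) (hx1 : ∀ s, x1 ≠ Sum.inl s)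
    (hcol : iasCol A x1 u = 1) :
    iasBasis A (Set.range (fun s => if s = u then x1 else Sum.inl s)) := by
  set b : V → V ⊕ V ⊕ V := fun s => if s = u then x1 else Sum.inl s with hbdef
  have hbs : ∀ s, s ≠ u → b s = Sum.inl s := fun s hs => if_neg hs
  have hbu : b u = x1 := if_pos rfl
  apply iasBasis_of_fun
  · intro s1 s2 h
    by_cases h1 : s1 = u
    · by_cases h2 : s2 = u
      · rw [h1, h2]
      · rw [h1, hbu, hbs s2 h2] at h; exact absurd h (hx1 s2)
    · by_cases h2 : s2 = u
      · rw [h2, hbu, hbs s1 h1] at h; exact absurd h.symm (hx1 s1)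
      · rw [hbs s1 h1, hbs s2 h2] at h; exact Sum.inl.inj h
  · intro v
    have hmem : ∀ s, iasCol A (b s) ∈ Submodule.span (ZMod 2) (Set.range (iasCol A ∘ b)) :=
      fun s => Submodule.subset_span ⟨s, rfl⟩
    have he : ∀ s, s ≠ u →
        iasCol A (Sum.inl s) ∈ Submodule.span (ZMod 2) (Set.range (iasCol A ∘ b)) := by
      intro s hs
      have := hmem s
      rwa [hbs s hs] at this
    by_cases hvu : v = u
    · subst hvu
      refine std_mem A {v} (Finset.mem_singleton_self v) (g := iasCol A x1) ?_ hcol ?_ ?_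
      · have := hmem v; rwa [hbu] at this
      · intro s hs hsv; exact absurd (Finset.mem_singleton.mp hs) hsv
      · intro s hs; exact he s (fun h => hs (h ▸ Finset.mem_singleton_self v))
    · exact he v hvu

/-- Membership cases for the one-substitution range. -/
lemma range_one_cases (u : V) (x1 : V ⊕ V ⊕ V) (y : V ⊕ V ⊕ V)
    (hy : y ∈ Set.range (fun s => if s = u then x1 else Sum.inl s)) :
    y = x1 ∨ ∃ s, s ≠ u ∧ y = Sum.inl s := by
  obtain ⟨s, hs⟩ := hy
  by_cases h : s = u
  · left; rw [← hs]; exact if_pos h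
  · right; exact ⟨s, h, by rw [← hs]; exact if_neg h⟩

/-- Two-vertex-substituted basis, with abstract span condition. -/
lemma basis_two (u t : V) (hut : u ≠ t) (x1 x2 : V ⊕ V ⊕ V)
    (hx1 : ∀ s, x1 ≠ Sum.inl s) (hx2 : ∀ s, x2 ≠ Sum.inl s) (h12 : x1 ≠ x2)
    (hspan : ∀ p : Submodule (ZMod 2) (V → ZMod 2),
      iasCol A x1 ∈ p → iasCol A x2 ∈ p →
      (∀ s, s ≠ u → s ≠ t → iasCol A (Sum.inl s) ∈ p) →
      iasCol A (Sum.inl u) ∈ p ∧ iasCol A (Sum.inl t) ∈ p) :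
    iasBasis A (Set.range (fun s => if s = u then x1 else if s = t then x2 else Sum.inl s)) := by
  set b : V → V ⊕ V ⊕ V := fun s => if s = u then x1 else if s = t then x2 else Sum.inl s
    with hbdef
  have hbu : b u = x1 := if_pos rfl
  have hbt : b t = x2 := by
    show (if t = u then x1 else if t = t then x2 else Sum.inl t) = x2
    rw [if_neg (Ne.symm hut), if_pos rfl]
  have hbs : ∀ s, s ≠ u → s ≠ t → b s = Sum.inl s := by
    intro s h1 h2
    show (if s = u then x1 else if s = t then x2 else Sum.inl s) = Sum.inl s
    rw [if_neg h1, if_neg h2]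
  have hvals : ∀ s, b s = x1 ∨ b s = x2 ∨ (s ≠ u ∧ s ≠ t ∧ b s = Sum.inl s) := by
    intro s
    by_cases h1 : s = u
    · left; rw [h1, hbu]
    · by_cases h2 : s = t
      · right; left; rw [h2, hbt]
      · right; right; exact ⟨h1, h2, hbs s h1 h2⟩
  apply iasBasis_of_fun
  · intro s1 s2 h
    rcases hvals s1 with h1 | h1 | ⟨h1u, h1t, h1⟩ <;>
      rcases hvals s2 with h2 | h2 | ⟨h2u, h2t, h2⟩
    · -- both x1 : s1 = u and s2 = u
      have e1 : s1 = u := by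
        by_contra hc
        by_cases hc2 : s1 = t
        · rw [hc2, hbt] at h1; exact h12 h1.symm
        · rw [hbs s1 hc hc2] at h1; exact hx1 s1 h1.symm
      have e2 : s2 = u := by
        by_contra hc
        by_cases hc2 : s2 = t
        · rw [hc2, hbt] at h2; exact h12 h2.symm
        · rw [hbs s2 hc hc2] at h2; exact hx1 s2 h2.symm
      rw [e1, e2]
    · rw [h1, h2] at h; exact absurd h h12
    · rw [h1, h2] at h; exact absurd h (hx1 s2)
    · rw [h1, h2] at h; exact absurd h.symm h12
    · have e1 : s1 = t := by
        by_contra hc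
        by_cases hc2 : s1 = u
        · rw [hc2, hbu] at h1; exact h12 h1
        · rw [hbs s1 hc2 hc] at h1; exact hx2 s1 h1.symm
      have e2 : s2 = t := by
        by_contra hc
        by_cases hc2 : s2 = u
        · rw [hc2, hbu] at h2; exact h12 h2
        · rw [hbs s2 hc2 hc] at h2; exact hx2 s2 h2.symm
      rw [e1, e2]
    · rw [h1, h2] at h; exact absurd h (hx2 s2)
    · rw [h1, h2] at h; exact absurd h.symm (hx1 s1)
    · rw [h1, h2] at h; exact absurd h.symm (hx2 s1)
    · rw [h1, h2] at h; exact Sum.inl.inj h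
  · intro v
    have hmem : ∀ s, iasCol A (b s) ∈ Submodule.span (ZMod 2) (Set.range (iasCol A ∘ b)) :=
      fun s => Submodule.subset_span ⟨s, rfl⟩
    have he : ∀ s, s ≠ u → s ≠ t →
        iasCol A (Sum.inl s) ∈ Submodule.span (ZMod 2) (Set.range (iasCol A ∘ b)) := by
      intro s hs1 hs2
      have := hmem s
      rwa [hbs s hs1 hs2] at this
    have h1 := hmem u; rw [hbu] at h1
    have h2 := hmem t; rw [hbt] at h2
    have := hspan _ h1 h2 he
    by_cases hvu : v = u
    · rw [hvu]; exact this.1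
    · by_cases hvt : v = t
      · rw [hvt]; exact this.2
      · exact he v hvu hvt

/-- Membership cases for the two-substitution range. -/
lemma range_two_cases (u t : V) (x1 x2 : V ⊕ V ⊕ V) (y : V ⊕ V ⊕ V)
    (hy : y ∈ Set.range (fun s => if s = u then x1 else if s = t then x2 else Sum.inl s)) :
    y = x1 ∨ y = x2 ∨ ∃ s, s ≠ u ∧ s ≠ t ∧ y = Sum.inl s := by
  obtain ⟨s, hs⟩ := hy
  by_cases h1 : s = u
  · left; rw [← hs]; exact if_pos h1
  · by_cases h2 : s = t
    · right; left; rw [← hs]; show (if s = u then x1 else if s = t then x2 else Sum.inl s) = x2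
      rw [if_neg h1, if_pos h2]
    · right; right
      refine ⟨s, h1, h2, ?_⟩
      rw [← hs]
      show (if s = u then x1 else if s = t then x2 else Sum.inl s) = Sum.inl s
      rw [if_neg h1, if_neg h2]

end Aux

/-- Let `G` be a looped simple graph having two distinct vertices `v, w` each incident
with an edge.  Then no element of `M[IAS(G)]` is a coloop; and if two distinct non-coloop
elements `ρ, σ` are in series (no basis excludes both), then they are the two non-loop
elements of the vertex triple of an isolated vertex of `G` (namely `φ(u)` and `ψ(u)` if
`u` is unlooped, `φ(u)` and `χ(u)` if `u` is looped). -/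
theorem series_elements_isolated_vertex {V : Type} [Fintype V] [DecidableEq V]
    (A : Matrix V V (ZMod 2)) (hA : A.IsSymm)
    (v w : V) (hvw : v ≠ w)
    (hv : ∃ u, u ≠ v ∧ A u v = 1) (hw : ∃ u, u ≠ w ∧ A u w = 1) :
    (∀ x : V ⊕ V ⊕ V, ¬ iasColoop A x) ∧
    (∀ ρ σ : V ⊕ V ⊕ V, ρ ≠ σ →
      ¬ iasColoop A ρ → ¬ iasColoop A σ →
      (∀ Bs, iasBasis A Bs → ρ ∈ Bs ∨ σ ∈ Bs) →
      ∃ u : V, (∀ z, z ≠ u → A z u = 0) ∧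
        ({ρ, σ} : Set (V ⊕ V ⊕ V)) =
          {Sum.inl u, if A u u = 0 then Sum.inr (Sum.inr u) else Sum.inr (Sum.inl u)}) := by
  classical
  -- the one-vertex-substituted basis for each u, avoiding `Sum.inl u`
  have hcolu : ∀ u : V, iasCol A (cEl A u) u = 1 := by
    intro u; rw [cCol]; simp
  have basisU : ∀ u : V,
      iasBasis A (Set.range (fun s => if s = u then cEl A u else Sum.inl s)) :=
    fun u => basis_one A u (cEl A u) (cEl_ne_inl A u) (hcolu u)
  have notinU : ∀ u : V,
      Sum.inl u ∉ Set.range (fun s => if s = u then cEl A u else Sum.inl s) := by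
    intro u hu
    rcases range_one_cases u (cEl A u) _ hu with h | ⟨s, hs, h⟩
    · exact cEl_ne_inl A u u h.symm
    · exact hs (Sum.inl.inj h.symm)
  -- no coloops
  have hnc : ∀ x : V ⊕ V ⊕ V, ¬ iasColoop A x := by
    intro x hx
    match x with
    | Sum.inl u => exact notinU u (hx _ (basisU u))
    | Sum.inr y =>
      obtain ⟨s, hs⟩ := hx _ (basis_inl A)
      exact nomatch hs
  refine ⟨hnc, ?_⟩
  -- main asymmetric claim
  have main : ∀ ρ σ : V ⊕ V ⊕ V, ρ ≠ σ →
      (∀ Bs, iasBasis A Bs → ρ ∈ Bs ∨ σ ∈ Bs) →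
      (∃ u, ρ = Sum.inl u) →
      ∃ u : V, (∀ z, z ≠ u → A z u = 0) ∧ ρ = Sum.inl u ∧ σ = cEl A u := by
    rintro ρ σ hne hser ⟨u, rfl⟩
    have hσ : σ ∈ Set.range (fun s => if s = u then cEl A u else Sum.inl s) :=
      (hser _ (basisU u)).resolve_left (notinU u)
    rcases range_one_cases u (cEl A u) _ hσ with hσc | ⟨t, htu, hσt⟩
    · -- σ = cEl A u ; show u is isolated
      refine ⟨u, ?_, rfl, hσc⟩
      intro z hzu
      by_contra hAzu
      have hAzu1 : A z u = 1 := zmod2_ne_zero hAzu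
      have hAuz1 : A u z = 1 := (hA.apply z u).trans hAzu1
      -- basis avoiding both Sum.inl u and cEl A u
      have hbig : iasBasis A (Set.range (fun s =>
          if s = u then dEl A u else if s = z then Sum.inr (Sum.inl z) else Sum.inl s)) := by
        apply basis_two A u z (Ne.symm hzu) (dEl A u) (Sum.inr (Sum.inl z))
          (dEl_ne_inl A u) (by intro s h; exact nomatch h)
        · unfold dEl; split <;> simp [Ne.symm hzu, hzu]
        · intro p h1 h2 he
          have hez : iasCol A (Sum.inl z) ∈ p := by
            refine std_mem A {u, z} (by simp) (g := iasCol A (dEl A u)) h1 ?_ ?_ ?_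
            · rw [dCol]; simp [hzu, hAzu1]
            · intro s hs hsz
              rcases Finset.mem_insert.mp hs with h | h
              · subst h; rw [dCol]; simp
              · exact absurd (Finset.mem_singleton.mp h) hsz
            · intro s hs
              simp only [Finset.mem_insert, Finset.mem_singleton, not_or] at hs
              exact he s hs.1 hs.2
          have heu : iasCol A (Sum.inl u) ∈ p := by
            refine std_mem A {u} (Finset.mem_singleton_self u)
              (g := iasCol A (Sum.inr (Sum.inl z))) h2 ?_ ?_ ?_
            · show A u z = 1; exact hAuz1
            · intro s hs hsu; exact absurd (Finset.mem_singleton.mp hs) hsu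
            · intro s hs
              rw [Finset.mem_singleton] at hs
              by_cases hsz : s = z
              · rw [hsz]; exact hez
              · exact he s hs hsz
          exact ⟨heu, hez⟩
      rcases hser _ hbig with hmem | hmem
      · rcases range_two_cases u z (dEl A u) (Sum.inr (Sum.inl z)) _ hmem with
          h | h | ⟨s, hs1, _, h⟩
        · exact dEl_ne_inl A u u h.symm
        · exact nomatch h
        · exact hs1 (Sum.inl.inj h).symm
      · rw [hσc] at hmem
        rcases range_two_cases u z (dEl A u) (Sum.inr (Sum.inl z)) _ hmem with
          h | h | ⟨s, _, _, h⟩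
        · exact cEl_ne_dEl A u h
        · revert h; unfold cEl; split
          · intro h; exact nomatch h
          · intro h; exact hzu (Sum.inl.inj (Sum.inr.inj h)).symm
        · exact cEl_ne_inl A u s h
    · -- σ = Sum.inl t with t ≠ u : contradiction
      exfalso
      by_cases hAtu : A t u = 0
      · -- basis with cEl A u, cEl A t
        have hAut : A u t = 0 := (hA.apply t u).trans hAtu
        have hbig : iasBasis A (Set.range (fun s =>
            if s = u then cEl A u else if s = t then cEl A t else Sum.inl s)) := by
          apply basis_two A u t (Ne.symm htu) (cEl A u) (cEl A t)
            (cEl_ne_inl A u) (cEl_ne_inl A t)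
          · unfold cEl; split <;> split <;> simp [htu, Ne.symm htu]
          · intro p h1 h2 he
            constructor
            · refine std_mem A {u, t} (by simp) (g := iasCol A (cEl A u)) h1 ?_ ?_ ?_
              · exact hcolu u
              · intro s hs hsu
                rcases Finset.mem_insert.mp hs with h | h
                · exact absurd h hsu
                · rw [Finset.mem_singleton.mp h, cCol]; simp [htu, hAtu]
              · intro s hs
                simp only [Finset.mem_insert, Finset.mem_singleton, not_or] at hs
                exact he s hs.1 hs.2
            · refine std_mem A {u, t} (by simp) (g := iasCol A (cEl A t)) h2 ?_ ?_ ?_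
              · exact hcolu t
              · intro s hs hst
                rcases Finset.mem_insert.mp hs with h | h
                · rw [h, cCol]; simp [Ne.symm htu, hAut]
                · exact absurd (Finset.mem_singleton.mp h) hst
              · intro s hs
                simp only [Finset.mem_insert, Finset.mem_singleton, not_or] at hs
                exact he s hs.1 hs.2
        rcases hser _ hbig with hmem | hmem
        · rcases range_two_cases u t (cEl A u) (cEl A t) _ hmem with h | h | ⟨s, hs1, _, h⟩
          · exact cEl_ne_inl A u u h.symm
          · exact cEl_ne_inl A t u h.symm
          · exact hs1 (Sum.inl.inj h).symm
        · rw [hσt] at hmem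
          rcases range_two_cases u t (cEl A u) (cEl A t) _ hmem with h | h | ⟨s, _, hs2, h⟩
          · exact cEl_ne_inl A u t h.symm
          · exact cEl_ne_inl A t t h.symm
          · exact hs2 (Sum.inl.inj h).symm
      · -- A t u = 1 : basis with χ(u), ψ(u)
        have hAtu1 : A t u = 1 := zmod2_ne_zero hAtu
        have hbig : iasBasis A (Set.range (fun s =>
            if s = u then Sum.inr (Sum.inl u) else if s = t then Sum.inr (Sum.inr u)
            else Sum.inl s)) := by
          apply basis_two A u t (Ne.symm htu) (Sum.inr (Sum.inl u)) (Sum.inr (Sum.inr u))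
            (by intro s h; exact nomatch h) (by intro s h; exact nomatch h)
            (by intro h; exact nomatch h)
          intro p h1 h2 he
          have hsum : iasCol A (Sum.inr (Sum.inl u)) + iasCol A (Sum.inr (Sum.inr u))
              = iasCol A (Sum.inl u) := by
            funext x
            show A x u + (A x u + (if x = u then 1 else 0)) = (if x = u then 1 else 0)
            rw [← add_assoc, CharTwo.add_self_eq_zero, zero_add]
          have heu : iasCol A (Sum.inl u) ∈ p := by
            rw [← hsum]; exact Submodule.add_mem _ h1 h2
          have het : iasCol A (Sum.inl t) ∈ p := by
            refine std_mem A {t} (Finset.mem_singleton_self t)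
              (g := iasCol A (Sum.inr (Sum.inl u))) h1 ?_ ?_ ?_
            · exact hAtu1
            · intro s hs hst; exact absurd (Finset.mem_singleton.mp hs) hst
            · intro s hs
              rw [Finset.mem_singleton] at hs
              by_cases hsu : s = u
              · rw [hsu]; exact heu
              · exact he s hsu hs
          exact ⟨heu, het⟩
        rcases hser _ hbig with hmem | hmem
        · rcases range_two_cases u t (Sum.inr (Sum.inl u)) (Sum.inr (Sum.inr u)) _ hmem with
            h | h | ⟨s, hs1, _, h⟩
          · exact nomatch h
          · exact nomatch h
          · exact hs1 (Sum.inl.inj h).symm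
        · rw [hσt] at hmem
          rcases range_two_cases u t (Sum.inr (Sum.inl u)) (Sum.inr (Sum.inr u)) _ hmem with
            h | h | ⟨s, _, hs2, h⟩
          · exact nomatch h
          · exact nomatch h
          · exact hs2 (Sum.inl.inj h).symm
  -- assemble the symmetric statement
  intro ρ σ hne _ _ hser
  rcases hser _ (basis_inl A) with hmem | hmem
  · obtain ⟨u0, hu0⟩ := hmem
    obtain ⟨u, hiso, hρ, hσ⟩ := main ρ σ hne hser ⟨u0, hu0.symm⟩
    refine ⟨u, hiso, ?_⟩
    rw [hρ, hσ]
    rfl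
  · obtain ⟨u0, hu0⟩ := hmem
    obtain ⟨u, hiso, hσ, hρ⟩ := main σ ρ (Ne.symm hne)
      (fun Bs hBs => (hser Bs hBs).symm) ⟨u0, hu0.symm⟩
    refine ⟨u, hiso, ?_⟩
    rw [Set.pair_comm, hσ, hρ]
    rfl
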